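/- For every positive real constant d and every real number x, the saturation error of the normalized Gaussian-shift sum as an approximation of the constant function 1 satisfies |(1/√(πd)) · Σ_{n∈ℤ} exp(−(x − n)²/d) − 1| < csch(π²d), where csch denotes the hyperbolic cosecant. -/

import Mathlib

open Real

lemma summable_exp_neg_sq_nat {a : ℝ} (ha : 0 < a) :
    Summable fun n : ℕ => Real.exp (-a * (n : ℝ) ^ 2) := by
  apply Summable.of_nonneg_of_le (g := fun n : ℕ => Real.exp (-a * (n:ℝ)^2))
    (f := fun n : ℕ => Real.exp (-a) ^ n) (fun n => (Real.exp_pos _).le)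
  · intro n
    rw [← Real.exp_nat_mul, Real.exp_le_exp]
    have h1 : (n : ℝ) ≤ (n : ℝ) ^ 2 := by
      have := Nat.le_self_pow two_ne_zero n
      exact_mod_cast this
    nlinarith
  · exact summable_geometric_of_lt_one (Real.exp_pos _).le
      (Real.exp_lt_one_iff.mpr (by linarith))

lemma summable_exp_neg_sq_int {a : ℝ} (ha : 0 < a) :
    Summable fun n : ℤ => Real.exp (-a * (n : ℝ) ^ 2) := by
  apply Summable.of_nat_of_neg <;> simpa using summable_exp_neg_sq_nat ha

lemma gauss_poisson (d : ℝ) (hd : 0 < d) (x : ℝ) :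
    ∑' n : ℤ, Real.exp (-(x - n) ^ 2 / d)
      = Real.sqrt (π * d) * ∑' n : ℤ, Real.exp (-(π ^ 2 * d) * n ^ 2) * Real.cos (2 * π * n * x) := by
  have hπd : 0 < π * d := mul_pos pi_pos hd
  have hdc : (d : ℂ) ≠ 0 := Complex.ofReal_ne_zero.mpr hd.ne'
  have hπc : ((π : ℝ) : ℂ) ≠ 0 := Complex.ofReal_ne_zero.mpr pi_ne_zero
  have hπdc : (((π * d : ℝ)) : ℂ) ≠ 0 := Complex.ofReal_ne_zero.mpr hπd.ne'
  have ha : 0 < (((π * d : ℝ)⁻¹ : ℝ) : ℂ).re := by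
    simpa using inv_pos.mpr hπd
  have key := Complex.tsum_exp_neg_quadratic ha ((x / (π * d) : ℝ) : ℂ)
  -- rewrite LHS terms
  have h1 : ∀ n : ℤ, Complex.exp (-(π:ℝ) * (((π * d : ℝ)⁻¹ : ℝ) : ℂ) * (n:ℂ) ^ 2
        + 2 * (π:ℝ) * ((x / (π * d) : ℝ) : ℂ) * (n:ℂ))
      = Complex.exp ((x ^ 2 / d : ℝ)) * Complex.exp ((-(x - (n:ℝ)) ^ 2 / d : ℝ)) := by
    intro n
    rw [← Complex.exp_add]
    congr 1
    push_cast
    field_simp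
    ring
  have h2 : ∀ n : ℤ, Complex.exp (-(π:ℝ) / (((π * d : ℝ)⁻¹ : ℝ) : ℂ)
        * ((n:ℂ) + Complex.I * ((x / (π * d) : ℝ) : ℂ)) ^ 2)
      = Complex.exp ((x ^ 2 / d : ℝ)) *
          (Complex.exp ((-(π ^ 2 * d) * (n:ℝ) ^ 2 : ℝ)) *
            Complex.exp ((-(2 * π * n * x) : ℝ) * Complex.I)) := by
    intro n
    rw [← Complex.exp_add, ← Complex.exp_add]
    congr 1
    have : (((π * d : ℝ)⁻¹ : ℝ) : ℂ) = ((π * d : ℝ) : ℂ)⁻¹ := by push_cast; ring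
    rw [this, div_inv_eq_mul]
    push_cast
    field_simp
    linear_combination (-(x:ℂ)^2) * Complex.I_sq
  have hA : (1:ℂ) / (((π * d : ℝ)⁻¹ : ℝ) : ℂ) ^ (1/2 : ℂ) = ((Real.sqrt (π * d) : ℝ) : ℂ) := by
    rw [show ((1/2 : ℂ)) = ((1/2 : ℝ) : ℂ) by norm_num,
      ← Complex.ofReal_cpow (inv_nonneg.mpr hπd.le),
      Real.inv_rpow hπd.le, ← Real.sqrt_eq_rpow, one_div, ← Complex.ofReal_inv, inv_inv]
  simp only [h1, h2] at key
  rw [tsum_mul_left, tsum_mul_left, hA] at key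
  set E : ℂ := Complex.exp ((x ^ 2 / d : ℝ)) with hE
  have key2 : (∑' n : ℤ, Complex.exp ((-(x - (n:ℝ)) ^ 2 / d : ℝ)))
      = ((Real.sqrt (π * d) : ℝ) : ℂ) * ∑' n : ℤ,
          Complex.exp ((-(π ^ 2 * d) * (n:ℝ) ^ 2 : ℝ)) *
            Complex.exp ((-(2 * π * (n:ℝ) * x) : ℝ) * Complex.I) := by
    apply mul_left_cancel₀ (Complex.exp_ne_zero ((x ^ 2 / d : ℝ) : ℂ))
    rw [key]; ring
  have hsum : Summable fun n : ℤ =>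
      Complex.exp ((-(π ^ 2 * d) * (n:ℝ) ^ 2 : ℝ)) *
        Complex.exp ((-(2 * π * (n:ℝ) * x) : ℝ) * Complex.I) := by
    apply Summable.of_norm
    have hb : 0 < π ^ 2 * d := mul_pos (pow_pos pi_pos 2) hd
    apply Summable.congr (summable_exp_neg_sq_int hb)
    intro n
    rw [norm_mul, Complex.norm_exp_ofReal_mul_I, mul_one,
      Complex.norm_exp, Complex.ofReal_re]
  have hofr : (∑' n : ℤ, Complex.exp ((-(x - (n:ℝ)) ^ 2 / d : ℝ)))
      = ((∑' n : ℤ, Real.exp (-(x - (n:ℝ)) ^ 2 / d) : ℝ) : ℂ) := by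
    rw [Complex.ofReal_tsum]
    exact tsum_congr fun n => (Complex.ofReal_exp _).symm
  rw [hofr] at key2
  have hre := congrArg Complex.re key2
  rw [Complex.ofReal_re, Complex.re_ofReal_mul, Complex.re_tsum hsum] at hre
  rw [hre]
  congr 1
  apply tsum_congr
  intro n
  rw [← Complex.ofReal_exp, Complex.re_ofReal_mul, Complex.exp_ofReal_mul_I_re, Real.cos_neg]

/-- The hyperbolic cosecant `csch(a) = 2/(e^a − e^{−a})`. -/
noncomputable def csch (a : ℝ) : ℝ := 2 / (Real.exp a - Real.exp (-a))

/-- For every `d > 0` and every real `x`, the saturation error of the normalized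
Gaussian-shift sum approximating the constant function `1` satisfies
`|(1/√(πd)) · Σ_{n∈ℤ} exp(−(x − n)²/d) − 1| < csch(π²d)`. -/
theorem gaussian_saturation_error_lt_csch (d : ℝ) (hd : 0 < d) (x : ℝ) :
    |(1 / Real.sqrt (Real.pi * d)) * (∑' n : ℤ, Real.exp (-(x - n) ^ 2 / d)) - 1| <
      csch (Real.pi ^ 2 * d) := by
  set a : ℝ := π ^ 2 * d with ha
  have hapos : 0 < a := mul_pos (pow_pos pi_pos 2) hd
  have hπd : 0 < π * d := mul_pos pi_pos hd
  have hsqrt : Real.sqrt (π * d) ≠ 0 := (Real.sqrt_pos.mpr hπd).ne'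
  set f : ℤ → ℝ := fun n => Real.exp (-a * n ^ 2) * Real.cos (2 * π * n * x) with hf
  have hfs : Summable f := by
    apply Summable.of_norm_bounded (summable_exp_neg_sq_int hapos)
    intro n
    rw [hf, norm_mul, Real.norm_eq_abs, Real.norm_eq_abs, abs_of_pos (Real.exp_pos _)]
    calc Real.exp (-a * n ^ 2) * |Real.cos (2 * π * n * x)|
        ≤ Real.exp (-a * n ^ 2) * 1 :=
          mul_le_mul_of_nonneg_left (Real.abs_cos_le_one _) (Real.exp_pos _).le
      _ = Real.exp (-a * n ^ 2) := mul_one _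
  have hmain : (1 / Real.sqrt (π * d)) * (∑' n : ℤ, Real.exp (-(x - n) ^ 2 / d)) =
      ∑' n : ℤ, f n := by
    rw [gauss_poisson d hd x, ← mul_assoc, one_div, inv_mul_cancel₀ hsqrt, one_mul]
  have hf0 : f 0 = 1 := by simp [hf]
  have hsplit : (∑' n : ℤ, f n) - 1 = ∑' n : ℤ, if n = 0 then 0 else f n := by
    rw [Summable.tsum_eq_add_tsum_ite hfs 0, hf0]; ring
  rw [hmain, hsplit]
  -- bound by the sum with cos replaced by 1
  set g : ℤ → ℝ := fun n => if n = 0 then 0 else Real.exp (-a * n ^ 2) with hg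
  have hgs : Summable g := by
    apply Summable.of_norm_bounded (summable_exp_neg_sq_int hapos)
    intro n
    rw [hg]
    by_cases h : n = 0 <;> simp [h, abs_of_pos (Real.exp_pos _), le_refl]
  have hbound : |∑' n : ℤ, if n = 0 then 0 else f n| ≤ ∑' n : ℤ, g n := by
    calc |∑' n : ℤ, if n = 0 then 0 else f n|
        ≤ ∑' n : ℤ, ‖if n = 0 then 0 else f n‖ := by
          rw [← Real.norm_eq_abs]
          apply norm_tsum_le_tsum_norm
          apply Summable.of_norm_bounded (summable_exp_neg_sq_int hapos)
          intro n
          rw [norm_norm]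
          by_cases h : n = 0
          · simp [h, (Real.exp_pos _).le]
          · simp only [h, if_false, Real.norm_eq_abs, hf, abs_mul,
              abs_of_pos (Real.exp_pos _)]
            calc Real.exp (-a * n ^ 2) * |Real.cos (2 * π * n * x)|
                ≤ Real.exp (-a * n ^ 2) * 1 :=
                  mul_le_mul_of_nonneg_left (Real.abs_cos_le_one _) (Real.exp_pos _).le
              _ = Real.exp (-a * n ^ 2) := mul_one _
      _ ≤ ∑' n : ℤ, g n := by
          apply Summable.tsum_le_tsum _ _ hgs
          · intro n
            by_cases h : n = 0
            · simp [h, hg]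
            · simp only [h, if_false, Real.norm_eq_abs, hf, hg, abs_mul,
                abs_of_pos (Real.exp_pos _)]
              calc Real.exp (-a * n ^ 2) * |Real.cos (2 * π * n * x)|
                  ≤ Real.exp (-a * n ^ 2) * 1 :=
                    mul_le_mul_of_nonneg_left (Real.abs_cos_le_one _) (Real.exp_pos _).le
                _ = Real.exp (-a * n ^ 2) := mul_one _
          · apply Summable.of_norm_bounded (summable_exp_neg_sq_int hapos)
            intro n
            rw [norm_norm]
            by_cases h : n = 0
            · simp [h, (Real.exp_pos _).le]
            · simp only [h, if_false, Real.norm_eq_abs, hf, abs_mul,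
                abs_of_pos (Real.exp_pos _)]
              calc Real.exp (-a * n ^ 2) * |Real.cos (2 * π * n * x)|
                  ≤ Real.exp (-a * n ^ 2) * 1 :=
                    mul_le_mul_of_nonneg_left (Real.abs_cos_le_one _) (Real.exp_pos _).le
                _ = Real.exp (-a * n ^ 2) := mul_one _
  refine lt_of_le_of_lt hbound ?_
  -- ∑ g = 2 * ∑_{k : ℕ} exp(-a (k+1)^2)
  have hsnat : Summable fun k : ℕ => Real.exp (-a * ((k : ℝ) + 1) ^ 2) := by
    have := summable_exp_neg_sq_nat hapos
    rw [← summable_nat_add_iff 1] at this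
    apply this.congr
    intro k
    push_cast
    ring_nf
  have hgnat : Summable fun k : ℕ => g k := by
    apply Summable.of_norm_bounded (summable_exp_neg_sq_nat hapos)
    intro n
    by_cases h : n = 0 <;> simp [hg, h, abs_of_pos (Real.exp_pos _), le_refl, (Real.exp_pos _).le]
  have hgneg : Summable fun k : ℕ => g (-(k + 1)) := by
    apply hsnat.congr
    intro k
    simp only [hg]
    rw [if_neg (by omega)]
    congr 1
    push_cast
    ring
  have hgsum : ∑' n : ℤ, g n = 2 * ∑' k : ℕ, Real.exp (-a * ((k : ℝ) + 1) ^ 2) := by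
    rw [tsum_of_nat_of_neg_add_one hgnat hgneg]
    have e1 : ∑' k : ℕ, g k = ∑' k : ℕ, Real.exp (-a * ((k : ℝ) + 1) ^ 2) := by
      rw [Summable.tsum_eq_zero_add hgnat]
      rw [show g ((0:ℕ):ℤ) = 0 from by simp [hg], zero_add]
      apply tsum_congr
      intro k
      simp only [hg]
      rw [if_neg (by omega)]
      push_cast
      ring_nf
    have e2 : ∑' k : ℕ, g (-(k + 1)) = ∑' k : ℕ, Real.exp (-a * ((k : ℝ) + 1) ^ 2) := by
      apply tsum_congr
      intro k
      simp only [hg]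
      rw [if_neg (by omega)]
      congr 1
      push_cast
      ring
    rw [e1, e2]; ring
  rw [hgsum]
  -- compare with geometric series
  have hgeo : Summable fun k : ℕ => Real.exp (-a * (2 * (k : ℝ) + 1)) := by
    apply Summable.congr (f := fun k : ℕ => Real.exp (-a) * Real.exp (-2 * a) ^ k)
    · apply Summable.mul_left
      exact summable_geometric_of_lt_one (Real.exp_pos _).le
        (Real.exp_lt_one_iff.mpr (by linarith))
    · intro k
      rw [← Real.exp_nat_mul, ← Real.exp_add]
      ring_nf
  have hlt : (∑' k : ℕ, Real.exp (-a * ((k : ℝ) + 1) ^ 2)) <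
      ∑' k : ℕ, Real.exp (-a * (2 * (k : ℝ) + 1)) := by
    apply Summable.tsum_lt_tsum (i := 1) _ _ hsnat hgeo
    · intro k
      rw [Real.exp_le_exp]
      nlinarith [mul_nonneg hapos.le (sq_nonneg ((k : ℝ)))]
    · rw [Real.exp_lt_exp]
      push_cast
      nlinarith
  have hgeosum : ∑' k : ℕ, Real.exp (-a * (2 * (k : ℝ) + 1)) =
      Real.exp (-a) * (1 - Real.exp (-2 * a))⁻¹ := by
    have hterm : ∀ k : ℕ, Real.exp (-a * (2 * (k : ℝ) + 1)) =
        Real.exp (-a) * Real.exp (-2 * a) ^ k := by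
      intro k
      rw [← Real.exp_nat_mul, ← Real.exp_add]
      ring_nf
    rw [tsum_congr hterm, tsum_mul_left,
      tsum_geometric_of_lt_one (Real.exp_pos _).le (Real.exp_lt_one_iff.mpr (by linarith))]
  have hfinal : 2 * (∑' k : ℕ, Real.exp (-a * (2 * (k : ℝ) + 1))) = csch a := by
    have h1 : Real.exp (-a) * Real.exp a = 1 := by rw [← Real.exp_add]; simp
    have h2 : Real.exp (-a) * Real.exp (-a) = Real.exp (-2 * a) := by
      rw [← Real.exp_add]; ring_nf
    have h3 : Real.exp (-2 * a) < 1 := Real.exp_lt_one_iff.mpr (by linarith)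
    have h4 : Real.exp (-a) < Real.exp a := Real.exp_lt_exp.mpr (by linarith)
    have hden1 : (0:ℝ) < 1 - Real.exp (-2 * a) := by linarith
    have hden2 : (0:ℝ) < Real.exp a - Real.exp (-a) := by linarith
    have hsd : (Real.exp a - Real.exp (-a)) * Real.exp (-a) = 1 - Real.exp (-2 * a) := by
      linear_combination h1 - h2
    rw [hgeosum, csch, eq_div_iff hden2.ne']
    calc 2 * (Real.exp (-a) * (1 - Real.exp (-2 * a))⁻¹) * (Real.exp a - Real.exp (-a))
        = 2 * ((Real.exp a - Real.exp (-a)) * Real.exp (-a) * (1 - Real.exp (-2 * a))⁻¹) := by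
          ring
      _ = 2 * ((1 - Real.exp (-2 * a)) * (1 - Real.exp (-2 * a))⁻¹) := by rw [hsd]
      _ = 2 := by rw [mul_inv_cancel₀ hden1.ne', mul_one]
  linarith
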